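/- Let g ∈ C¹([0,1], ℂ) with g(0) = 0. Then ∫₀¹ |g(r)|² dr ≤ (1/2) ∫₀¹ |g'(r)|² (1 − r²) dr. Moreover, there exists a constant C > 0, independent of g, such that ∫₀¹ |g(r)|² r dr ≤ C ∫₀¹ |(d/dr)(r g(r))|² ((1 − r²)/r) dr. -/

import Mathlib

open MeasureTheory Set Filter

-- Cauchy-Schwarz on an interval
lemma cs_aux {φ : ℝ → ℝ} (hφ : Continuous φ) (hφ0 : ∀ x, 0 ≤ φ x) {r : ℝ} (hr : 0 ≤ r) :
    (∫ s in (0:ℝ)..r, φ s) ^ 2 ≤ r * ∫ s in (0:ℝ)..r, φ s ^ 2 := by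
  have hIoc : IsFiniteMeasure (volume.restrict (Ioc (0:ℝ) r)) :=
    ⟨by rw [Measure.restrict_apply_univ]; exact measure_Ioc_lt_top⟩
  have hpq : (2:ℝ).HolderConjugate 2 := Real.HolderConjugate.two_two
  obtain ⟨C, hC⟩ := (isCompact_Icc (a := (0:ℝ)) (b := r)).exists_bound_of_continuousOn
    hφ.continuousOn
  have hmem : MemLp φ (ENNReal.ofReal 2) (volume.restrict (Ioc (0:ℝ) r)) := by
    refine MemLp.of_bound (hφ.aestronglyMeasurable.restrict) C ?_
    refine (ae_restrict_iff' measurableSet_Ioc).2 (Eventually.of_forall fun x hx => ?_)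
    exact hC x (Ioc_subset_Icc_self hx)
  have hmem1 : MemLp (fun _ : ℝ => (1:ℝ)) (ENNReal.ofReal 2) (volume.restrict (Ioc (0:ℝ) r)) :=
    memLp_const 1
  have hH := integral_mul_le_Lp_mul_Lq_of_nonneg hpq
    (Eventually.of_forall fun x => hφ0 x) (Eventually.of_forall fun _ => zero_le_one)
    hmem hmem1
  have hrpow : ∀ x : ℝ, x ^ (2:ℝ) = x ^ 2 := fun x => by
    rw [show (2:ℝ) = ((2:ℕ):ℝ) by norm_num, Real.rpow_natCast]
  simp only [mul_one, hrpow, one_pow] at hH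
  have hvol : ∫ _ in Ioc (0:ℝ) r, (1:ℝ) = r := by
    simp [Real.volume_Ioc, hr]
  rw [hvol] at hH
  rw [intervalIntegral.integral_of_le hr, intervalIntegral.integral_of_le hr]
  have h1 : 0 ≤ ∫ s in Ioc (0:ℝ) r, φ s ^ 2 :=
    integral_nonneg fun x => sq_nonneg _
  have h2 : 0 ≤ ∫ s in Ioc (0:ℝ) r, φ s := integral_nonneg fun x => hφ0 x
  calc (∫ s in Ioc (0:ℝ) r, φ s) ^ 2
      ≤ ((∫ s in Ioc (0:ℝ) r, φ s ^ 2) ^ ((1:ℝ)/2) * r ^ ((1:ℝ)/2)) ^ 2 :=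
        pow_le_pow_left₀ h2 hH 2
    _ = r * ∫ s in Ioc (0:ℝ) r, φ s ^ 2 := by
        rw [mul_pow, ← Real.rpow_natCast ((∫ s in Ioc (0:ℝ) r, φ s ^ 2) ^ ((1:ℝ)/2)) 2,
          ← Real.rpow_natCast (r ^ ((1:ℝ)/2)) 2, ← Real.rpow_mul h1, ← Real.rpow_mul hr]
        norm_num [mul_comm]

lemma key {f : ℝ → ℂ} (hf : ContDiff ℝ 1 f) (hf0 : f 0 = 0) {r : ℝ} (hr : 0 ≤ r) :
    ‖f r‖ ^ 2 ≤ r * ∫ s in (0:ℝ)..r, ‖deriv f s‖ ^ 2 := by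
  have hd : Continuous (deriv f) := hf.continuous_deriv le_rfl
  have h1 : f r = ∫ s in (0:ℝ)..r, deriv f s := by
    rw [intervalIntegral.integral_deriv_eq_sub
      (fun x _ => (hf.differentiable one_ne_zero).differentiableAt)
      (hd.intervalIntegrable _ _), hf0, sub_zero]
  have h2 : ‖f r‖ ≤ ∫ s in (0:ℝ)..r, ‖deriv f s‖ := by
    rw [h1]
    exact intervalIntegral.norm_integral_le_integral_norm hr
  calc ‖f r‖ ^ 2 ≤ (∫ s in (0:ℝ)..r, ‖deriv f s‖) ^ 2 :=
        pow_le_pow_left₀ (norm_nonneg _) h2 2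
    _ ≤ r * ∫ s in (0:ℝ)..r, ‖deriv f s‖ ^ 2 :=
        cs_aux hd.norm (fun x => norm_nonneg _) hr

lemma prim_hasDeriv {F : ℝ → ℝ} (hF : Continuous F) (x : ℝ) :
    HasDerivAt (fun r => ∫ s in (0:ℝ)..r, F s) (F x) x :=
  intervalIntegral.integral_hasDerivAt_right (hF.intervalIntegrable _ _)
    (hF.stronglyMeasurable.stronglyMeasurableAtFilter) hF.continuousAt

lemma ioo_eq_int (f : ℝ → ℝ) : ∫ r in Ioo (0:ℝ) 1, f r = ∫ r in (0:ℝ)..1, f r := by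
  rw [intervalIntegral.integral_of_le zero_le_one, integral_Ioc_eq_integral_Ioo]

theorem stmt_15 :
    ∃ C : ℝ, 0 < C ∧
      ∀ g : ℝ → ℂ,
        ContDiff ℝ 1 g → g 0 = 0 →
        ((∫ r in Ioo (0 : ℝ) 1, ‖g r‖ ^ 2)
            ≤ (1 / 2) * ∫ r in Ioo (0 : ℝ) 1, ‖deriv g r‖ ^ 2 * (1 - r ^ 2))
        ∧ ((∫ r in Ioo (0 : ℝ) 1, ‖g r‖ ^ 2 * r)
            ≤ C * ∫ r in Ioo (0 : ℝ) 1,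
                ‖deriv (fun s : ℝ => (s : ℂ) * g s) r‖ ^ 2 * ((1 - r ^ 2) / r)) := by
  refine ⟨1, one_pos, fun g hg hg0 => ?_⟩
  have hgc : Continuous g := hg.continuous
  have hd : Continuous (deriv g) := hg.continuous_deriv le_rfl
  constructor
  · -- Part 1
    set F : ℝ → ℝ := fun s => ‖deriv g s‖ ^ 2 with hFdef
    have hF : Continuous F := hd.norm.pow 2
    set G : ℝ → ℝ := fun r => ∫ s in (0:ℝ)..r, F s with hGdef
    have hGd : ∀ x : ℝ, HasDerivAt G (F x) x := prim_hasDeriv hF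
    have hGc : Continuous G := continuous_iff_continuousAt.2 fun x => (hGd x).continuousAt
    have step1 : (∫ r in Ioo (0:ℝ) 1, ‖g r‖ ^ 2) ≤ ∫ r in Ioo (0:ℝ) 1, r * G r := by
      refine setIntegral_mono_on ?_ ?_ measurableSet_Ioo ?_
      · exact ((hgc.norm.pow 2).integrableOn_Icc).mono_set Ioo_subset_Icc_self
      · exact ((continuous_id.mul hGc).integrableOn_Icc).mono_set Ioo_subset_Icc_self
      · exact fun r hr => key hg hg0 hr.1.le
    have parts := intervalIntegral.integral_mul_deriv_eq_deriv_mul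
      (u := G) (u' := F) (v := fun r => r ^ 2 / 2) (v' := fun r => r) (a := 0) (b := 1)
      (fun x _ => hGd x)
      (fun x _ => by simpa using (hasDerivAt_pow 2 x).div_const 2)
      (hF.intervalIntegrable 0 1) (continuous_id.intervalIntegrable 0 1)
    have hG0 : G 0 = 0 := intervalIntegral.integral_same
    have hsub : (∫ x in (0:ℝ)..1, F x * (1 - x ^ 2))
        = (∫ x in (0:ℝ)..1, F x) - ∫ x in (0:ℝ)..1, F x * x ^ 2 := by
      rw [← intervalIntegral.integral_sub (hF.intervalIntegrable 0 1)
        ((by fun_prop : Continuous fun x => F x * x ^ 2).intervalIntegrable 0 1)]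
      congr 1; funext x; ring
    have step2 : (∫ r in Ioo (0:ℝ) 1, r * G r)
        = (1/2) * ∫ r in Ioo (0:ℝ) 1, F r * (1 - r ^ 2) := by
      rw [ioo_eq_int, ioo_eq_int]
      have hcomm : (∫ r in (0:ℝ)..1, r * G r) = ∫ r in (0:ℝ)..1, G r * r := by
        congr 1; funext r; ring
      have hhalf : (∫ x in (0:ℝ)..1, F x * (x ^ 2 / 2))
          = (∫ x in (0:ℝ)..1, F x * x ^ 2) / 2 := by
        rw [← intervalIntegral.integral_div]
        congr 1; funext x; ring
      rw [hcomm, parts, hG0, hsub, hhalf]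
      ring
    calc (∫ r in Ioo (0:ℝ) 1, ‖g r‖ ^ 2) ≤ ∫ r in Ioo (0:ℝ) 1, r * G r := step1
      _ = (1/2) * ∫ r in Ioo (0:ℝ) 1, F r * (1 - r ^ 2) := step2
  · -- Part 2
    set h : ℝ → ℂ := fun s => (s : ℂ) * g s with hhdef
    have hh : ContDiff ℝ 1 h := (Complex.ofRealCLM.contDiff.of_le le_top).mul hg
    have hh0 : h 0 = 0 := by simp [hhdef]
    have hdh : Continuous (deriv h) := hh.continuous_deriv le_rfl
    set Φ : ℝ → ℝ := fun s => ‖deriv h s‖ ^ 2 with hΦdef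
    have hΦ : Continuous Φ := hdh.norm.pow 2
    set H : ℝ → ℝ := fun r => ∫ s in (0:ℝ)..r, Φ s with hHdef
    have hHd : ∀ x : ℝ, HasDerivAt H (Φ x) x := prim_hasDeriv hΦ
    have hHc : Continuous H := continuous_iff_continuousAt.2 fun x => (hHd x).continuousAt
    -- derivative formula / bound
    have hDh : ∀ s : ℝ, HasDerivAt h (g s + (s:ℂ) * deriv g s) s := fun s => by
      have h1 : HasDerivAt (fun t : ℝ => (t:ℂ)) 1 s := by
        simpa using (hasDerivAt_id s).ofReal_comp
      simpa using h1.fun_mul ((hg.differentiable one_ne_zero) s).hasDerivAt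
    obtain ⟨c, hc, hcmax⟩ := isCompact_Icc.exists_isMaxOn
      (nonempty_Icc.2 (zero_le_one (α := ℝ))) (hd.norm.continuousOn)
    set M : ℝ := ‖deriv g c‖ with hMdef
    have hM0 : 0 ≤ M := norm_nonneg _
    have hgb : ∀ s ∈ Icc (0:ℝ) 1, ‖g s‖ ≤ M * s := by
      intro s hs
      have := (convex_Icc (0:ℝ) 1).norm_image_sub_le_of_norm_hasDerivWithin_le
        (f := g) (f' := deriv g)
        (fun x _ => ((hg.differentiable one_ne_zero) x).hasDerivAt.hasDerivWithinAt)
        (fun x hx => hcmax hx) (left_mem_Icc.2 zero_le_one) hs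
      simpa [hg0, abs_of_nonneg hs.1] using this
    have hhb : ∀ s ∈ Icc (0:ℝ) 1, ‖deriv h s‖ ≤ 2 * M * s := by
      intro s hs
      rw [(hDh s).deriv]
      calc ‖g s + (s:ℂ) * deriv g s‖ ≤ ‖g s‖ + ‖(s:ℂ) * deriv g s‖ := norm_add_le _ _
        _ = ‖g s‖ + s * ‖deriv g s‖ := by
            rw [norm_mul, Complex.norm_real, Real.norm_of_nonneg hs.1]
        _ ≤ M * s + s * M := add_le_add (hgb s hs)
            (mul_le_mul_of_nonneg_left (hcmax hs) hs.1)
        _ = 2 * M * s := by ring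
    -- integrability of the RHS integrand
    have hmeas : AEStronglyMeasurable (fun r : ℝ => Φ r * ((1 - r ^ 2) / r))
        (volume.restrict (Ioo (0:ℝ) 1)) := by
      refine AEStronglyMeasurable.mul (hΦ.aestronglyMeasurable.restrict) ?_
      exact (Measurable.aestronglyMeasurable (by fun_prop))
    have hint : IntegrableOn (fun r : ℝ => Φ r * ((1 - r ^ 2) / r)) (Ioo (0:ℝ) 1) := by
      refine Integrable.mono' (g := fun _ => (2 * M) ^ 2)
        (integrableOn_const measure_Ioo_lt_top.ne) hmeas ?_
      refine (ae_restrict_iff' measurableSet_Ioo).2 (Eventually.of_forall fun x hx => ?_)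
      have hx0 : (0:ℝ) < x := hx.1
      have hx1 : x < 1 := hx.2
      have hq : 0 ≤ (1 - x ^ 2) / x := div_nonneg (by nlinarith) hx0.le
      rw [Real.norm_of_nonneg (mul_nonneg (sq_nonneg _) hq), mul_div_assoc',
        div_le_iff₀ hx0]
      have hb := hhb x ⟨hx0.le, hx1.le⟩
      have ha0 : (0:ℝ) ≤ ‖deriv h x‖ := norm_nonneg _
      have h4 : ‖deriv h x‖ ^ 2 ≤ (2 * M * x) ^ 2 := pow_le_pow_left₀ ha0 hb 2
      have h5 : (0:ℝ) ≤ 1 - x ^ 2 := by nlinarith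
      have h6 : ‖deriv h x‖ ^ 2 * (1 - x ^ 2) ≤ (2 * M * x) ^ 2 * (1 - x ^ 2) :=
        mul_le_mul_of_nonneg_right h4 h5
      have h7 : x * (1 - x ^ 2) ≤ 1 := by nlinarith
      have h8 : (2 * M * x) ^ 2 * (1 - x ^ 2) ≤ (2 * M) ^ 2 * x := by
        nlinarith [mul_le_mul_of_nonneg_left h7 (show (0:ℝ) ≤ 4 * M ^ 2 * x by positivity)]
      exact le_trans h6 h8
    -- pointwise first bound
    have step1 : (∫ r in Ioo (0:ℝ) 1, ‖g r‖ ^ 2 * r) ≤ ∫ r in Ioo (0:ℝ) 1, H r := by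
      refine setIntegral_mono_on ?_ ?_ measurableSet_Ioo ?_
      · exact (((hgc.norm.pow 2).mul continuous_id).integrableOn_Icc).mono_set
          Ioo_subset_Icc_self
      · exact (hHc.integrableOn_Icc).mono_set Ioo_subset_Icc_self
      · intro r hr
        have hk := key hh hh0 hr.1.le
        have hnorm : ‖h r‖ = r * ‖g r‖ := by
          rw [hhdef]; simp [norm_mul, Complex.norm_real, abs_of_pos hr.1]
        rw [hnorm, mul_pow] at hk
        have h3 : r * (‖g r‖ ^ 2 * r) ≤ r * H r := by
          have : r * (‖g r‖ ^ 2 * r) = r ^ 2 * ‖g r‖ ^ 2 := by ring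
          rw [this]; exact hk
        exact le_of_mul_le_mul_left h3 hr.1
    -- integration by parts
    have parts := intervalIntegral.integral_mul_deriv_eq_deriv_mul
      (u := H) (u' := Φ) (v := fun r => r) (v' := fun _ => 1) (a := 0) (b := 1)
      (fun x _ => hHd x) (fun x _ => hasDerivAt_id x)
      (hΦ.intervalIntegrable 0 1) (continuous_const.intervalIntegrable 0 1)
    have hH0 : H 0 = 0 := intervalIntegral.integral_same
    have step2 : (∫ r in Ioo (0:ℝ) 1, H r) = ∫ x in Ioo (0:ℝ) 1, Φ x * (1 - x) := by
      rw [ioo_eq_int, ioo_eq_int]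
      have h1 : (∫ r in (0:ℝ)..1, H r) = ∫ r in (0:ℝ)..1, H r * 1 := by
        congr 1; funext r; ring
      have hsub : (∫ x in (0:ℝ)..1, Φ x * (1 - x))
          = (∫ x in (0:ℝ)..1, Φ x) - ∫ x in (0:ℝ)..1, Φ x * x := by
        rw [← intervalIntegral.integral_sub (hΦ.intervalIntegrable 0 1)
          ((by fun_prop : Continuous fun x : ℝ => Φ x * x).intervalIntegrable 0 1)]
        congr 1; funext x; ring
      rw [h1, parts, hH0, hsub]
      ring
    have step3 : (∫ x in Ioo (0:ℝ) 1, Φ x * (1 - x))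
        ≤ ∫ x in Ioo (0:ℝ) 1, Φ x * ((1 - x ^ 2) / x) := by
      refine setIntegral_mono_on ?_ hint measurableSet_Ioo ?_
      · exact ((hΦ.mul (continuous_const.sub continuous_id)).integrableOn_Icc).mono_set
          Ioo_subset_Icc_self
      · intro x hx
        have hx0 : (0:ℝ) < x := hx.1
        refine mul_le_mul_of_nonneg_left ?_ (sq_nonneg _)
        rw [le_div_iff₀ hx0]
        nlinarith [hx.2]
    calc (∫ r in Ioo (0:ℝ) 1, ‖g r‖ ^ 2 * r)
        ≤ ∫ r in Ioo (0:ℝ) 1, H r := step1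
      _ = ∫ x in Ioo (0:ℝ) 1, Φ x * (1 - x) := step2
      _ ≤ ∫ x in Ioo (0:ℝ) 1, Φ x * ((1 - x ^ 2) / x) := step3
      _ = 1 * ∫ r in Ioo (0:ℝ) 1,
            ‖deriv (fun s : ℝ => (s : ℂ) * g s) r‖ ^ 2 * ((1 - r ^ 2) / r) := by
          rw [one_mul]
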